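/- Let (G, ·, Γ) be a right group module (Γ acts on G on the right by group automorphisms) and let T : G → Γ be an 𝒪-group operator, i.e. T(g)T(h) = T((g · T(h))h) for all g, h ∈ G. Then the operation g ⋆_T h := (g · T(h))h is an associative group law on the underlying set of G, with identity the identity of G, and the inverse of g is (g⁻¹) · T(g)⁻¹. -/

import Mathlib

/-- For a right group module `(G, ·, Γ)` and an 𝒪-group operator
`T : G → Γ`, the operation `g ⋆_T h := (g · T h) * h` is an associative group law on `G`
with identity `1` and inverse of `g` given by `(g⁻¹) · (T g)⁻¹`. -/
theorem OGroup_operator_adjacent_group_law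
    {G Γ : Type*} [Group G] [Group Γ]
    (act : G → Γ → G)
    -- `Γ` acts on the right on `G` by automorphisms
    (hmul : ∀ (x y : G) (a : Γ), act (x * y) a = act x a * act y a)
    (hcomp : ∀ (x : G) (a b : Γ), act (act x a) b = act x (a * b))
    (hone : ∀ x : G, act x 1 = x)
    -- `T` is an 𝒪-group operator
    (T : G → Γ)
    (hT : ∀ g h : G, T g * T h = T (act g (T h) * h)) :
    -- associativity of `⋆_T`
    (∀ g h k : G,
      act (act g (T h) * h) (T k) * k = act g (T (act h (T k) * k)) * (act h (T k) * k)) ∧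
    -- `1` is a two-sided identity for `⋆_T`
    (∀ g : G, act 1 (T g) * g = g) ∧
    (∀ g : G, act g (T 1) * 1 = g) ∧
    -- `(g⁻¹) · (T g)⁻¹` is a two-sided `⋆_T`-inverse of `g`
    (∀ g : G, act g (T (act g⁻¹ (T g)⁻¹)) * act g⁻¹ (T g)⁻¹ = 1) ∧
    (∀ g : G, act (act g⁻¹ (T g)⁻¹) (T g) * g = 1) := by
  have hact1 : ∀ a : Γ, act 1 a = 1 := by
    intro a
    have h := hmul 1 1 a
    simp only [one_mul] at h
    exact mul_eq_left.mp h.symm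
  have hT1 : T 1 = 1 := by
    have h := hT 1 1
    rw [hact1, one_mul] at h
    exact mul_eq_left.mp h
  have hinv : ∀ (x : G) (a : Γ), act x⁻¹ a = (act x a)⁻¹ := by
    intro x a
    have h := hmul x x⁻¹ a
    rw [mul_inv_cancel, hact1] at h
    exact (inv_eq_of_mul_eq_one_right h.symm).symm
  have hTinv : ∀ g : G, T (act g⁻¹ (T g)⁻¹) = (T g)⁻¹ := by
    intro g
    have h := hT (act g⁻¹ (T g)⁻¹) g
    rw [hcomp, inv_mul_cancel, hone, inv_mul_cancel, hT1] at h
    exact eq_inv_of_mul_eq_one_left h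
  refine ⟨?_, ?_, ?_, ?_, ?_⟩
  · intro g h k
    rw [hmul, hcomp, hT h k, mul_assoc]
  · intro g; rw [hact1, one_mul]
  · intro g; rw [hT1, hone, mul_one]
  · intro g
    rw [hTinv, hinv, mul_inv_cancel]
  · intro g
    rw [hcomp, inv_mul_cancel, hone, inv_mul_cancel]
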